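/- Let G be a finite thin 2-qBMG with color classes U and W such that |U| = |W| = n and both U and W are orbits of Aut_I(G). Then either the edge set E is a union of pairwise vertex-disjoint non-symmetric edges, or E is a union of pairwise vertex-disjoint symmetric edges; moreover Aut_I(G) is isomorphic to the symmetric group Sym(n). -/

import Mathlib

/-- Two vertices are equivalent (`x ∼̇ y`) if they have the same
out-neighbors and the same in-neighbors. -/
def dotSim {V : Type*} (E : V → V → Prop) (x y : V) : Prop :=
  (∀ z, E x z ↔ E y z) ∧ (∀ z, E z x ↔ E z y)

/-- `U` and `W` are the color classes of a 2-colored digraph with edge relation `E`: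
they partition the vertex set and every edge has one endpoint in each class. -/
def IsTwoColored {V : Type*} (E : V → V → Prop) (U W : Set V) : Prop :=
  (∀ v, v ∈ U ∨ v ∈ W) ∧ (∀ v, ¬(v ∈ U ∧ v ∈ W)) ∧
    ∀ u v, E u v → (u ∈ U ∧ v ∈ W) ∨ (u ∈ W ∧ v ∈ U)

/-- Axiom (N1). -/
def AxN1 {V : Type*} (E : V → V → Prop) : Prop :=
  ∀ u v, u ≠ v → ¬E u v → ¬E v u → ∀ w t, ¬(E u t ∧ E v w ∧ E t w)

/-- Axiom (N2): bi-transitivity. -/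
def AxN2 {V : Type*} (E : V → V → Prop) : Prop :=
  ∀ u v w t, E u v → E v w → E w t → E u t

/-- Axiom (N3). -/
def AxN3 {V : Type*} (E : V → V → Prop) : Prop :=
  ∀ u v w, E u w → E v w → (∀ z, E u z → E v z) ∨ (∀ z, E v z → E u z)

/-- A 2-qBMG: an irreflexive 2-colored digraph satisfying (N1), (N2), (N3). -/
def IsQBMG {V : Type*} (E : V → V → Prop) (U W : Set V) : Prop :=
  (∀ v, ¬E v v) ∧ IsTwoColored E U W ∧ AxN1 E ∧ AxN2 E ∧ AxN3 E

/-- An automorphism of the digraph: a permutation mapping edges to edges. -/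
def IsAut {V : Type*} (E : V → V → Prop) (π : Equiv.Perm V) : Prop :=
  ∀ u v, E u v → E (π u) (π v)

/-- A color-preserving automorphism of the 2-colored digraph. -/
def IsAutI {V : Type*} (E : V → V → Prop) (U W : Set V) (π : Equiv.Perm V) : Prop :=
  IsAut E π ∧ (∀ v ∈ U, π v ∈ U) ∧ (∀ v ∈ W, π v ∈ W)

/-- `O` is an orbit of `Aut_I(G)` on the vertex set. -/
def IsAutIOrbit {V : Type*} (E : V → V → Prop) (U W : Set V) (O : Set V) : Prop :=
  O.Nonempty ∧ ∀ x ∈ O, ∀ y, (y ∈ O ↔ ∃ g : Equiv.Perm V, IsAutI E U W g ∧ g x = y)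

/-- The edge set is a union of pairwise vertex-disjoint (single) edges: two edges
either coincide or share no endpoint. -/
def PairwiseDisjointEdges {V : Type*} (E : V → V → Prop) : Prop :=
  ∀ u v u' v', E u v → E u' v' →
    (u = u' ∧ v = v') ∨ (u ≠ u' ∧ u ≠ v' ∧ v ≠ u' ∧ v ≠ v')

/-- The edge set is a union of pairwise vertex-disjoint symmetric edges: two edges
either form the same (possibly reversed) pair or share no endpoint. -/
def PairwiseDisjointSymEdges {V : Type*} (E : V → V → Prop) : Prop :=
  ∀ u v u' v', E u v → E u' v' →
    (u = u' ∧ v = v') ∨ (u = v' ∧ v = u') ∨ (u ≠ u' ∧ u ≠ v' ∧ v ≠ u' ∧ v ≠ v')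

section Aux

variable {V : Type*} [Fintype V] [DecidableEq V] {E : V → V → Prop} {U W : Set V}

theorem myAutI_one : IsAutI E U W 1 := by
  refine ⟨fun u v h => ?_, fun v hv => ?_, fun v hv => ?_⟩ <;> simpa using ‹_›

theorem myAutI_mul {g h : Equiv.Perm V} (hg : IsAutI E U W g) (hh : IsAutI E U W h) :
    IsAutI E U W (g * h) := by
  refine ⟨fun u v huv => ?_, fun v hv => ?_, fun v hv => ?_⟩ <;>
    simp only [Equiv.Perm.mul_apply]
  · exact hg.1 _ _ (hh.1 _ _ huv)
  · exact hg.2.1 _ (hh.2.1 _ hv)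
  · exact hg.2.2 _ (hh.2.2 _ hv)

theorem myAutI_pow {g : Equiv.Perm V} (hg : IsAutI E U W g) : ∀ k, IsAutI E U W (g ^ k)
  | 0 => by rw [pow_zero]; exact myAutI_one
  | (k + 1) => by rw [pow_succ]; exact myAutI_mul (myAutI_pow hg k) hg

theorem myAutI_inv {g : Equiv.Perm V} (hg : IsAutI E U W g) : IsAutI E U W g⁻¹ := by
  have h1 : g ^ orderOf g = 1 := pow_orderOf_eq_one g
  have hpos : 0 < orderOf g := orderOf_pos g
  have h2 : g ^ (orderOf g - 1) = g⁻¹ := by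
    apply eq_inv_of_mul_eq_one_left
    rw [← pow_succ, Nat.sub_add_cancel hpos, h1]
  rw [← h2]; exact myAutI_pow hg _

theorem myAutI_edge_iff {g : Equiv.Perm V} (hg : IsAutI E U W g) (u v : V) :
    E u v ↔ E (g u) (g v) := by
  constructor
  · exact hg.1 u v
  · intro h
    have := (myAutI_inv hg).1 _ _ h
    simpa using this

theorem myOuts_ncard_eq {g : Equiv.Perm V} (hg : IsAutI E U W g) (x : V) :
    {z | E (g x) z}.ncard = {z | E x z}.ncard := by
  have himg : {z | E (g x) z} = g '' {z | E x z} := by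
    ext z
    simp only [Set.mem_image, Set.mem_setOf_eq]
    constructor
    · intro h
      refine ⟨g⁻¹ z, ?_, by simp⟩
      have := (myAutI_edge_iff hg x (g⁻¹ z)).2
      simp only [Equiv.Perm.inv_def, Equiv.apply_symm_apply] at this
      exact this h
    · rintro ⟨y, hy, rfl⟩
      exact (myAutI_edge_iff hg x y).1 hy
  rw [himg, Set.ncard_image_of_injective _ g.injective]

theorem myIns_ncard_eq {g : Equiv.Perm V} (hg : IsAutI E U W g) (x : V) :
    {z | E z (g x)}.ncard = {z | E z x}.ncard := by
  have himg : {z | E z (g x)} = g '' {z | E z x} := by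
    ext z
    simp only [Set.mem_image, Set.mem_setOf_eq]
    constructor
    · intro h
      refine ⟨g⁻¹ z, ?_, by simp⟩
      have := (myAutI_edge_iff hg (g⁻¹ z) x).2
      simp only [Equiv.Perm.inv_def, Equiv.apply_symm_apply] at this
      exact this h
    · rintro ⟨y, hy, rfl⟩
      exact (myAutI_edge_iff hg y x).1 hy
  rw [himg, Set.ncard_image_of_injective _ g.injective]

/-- Key lemma in the "both directions have edges" case. -/
theorem myNcard_pos {α : Type*} [Fintype α] {s : Set α} : 0 < s.ncard ↔ s.Nonempty :=
  Set.ncard_pos (Set.toFinite s)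

theorem myKey
    (hdisj : ∀ v, ¬(v ∈ U ∧ v ∈ W))
    (hbi : ∀ u v, E u v → (u ∈ U ∧ v ∈ W) ∨ (u ∈ W ∧ v ∈ U))
    (hN2 : AxN2 E)
    (hthin : ∀ x y, dotSim E x y → x = y)
    (hcOut : ∀ x y, ((x ∈ U ∧ y ∈ U) ∨ (x ∈ W ∧ y ∈ W)) →
      {z | E x z}.ncard = {z | E y z}.ncard)
    (hcIn : ∀ x y, ((x ∈ U ∧ y ∈ U) ∨ (x ∈ W ∧ y ∈ W)) →
      {z | E z x}.ncard = {z | E z y}.ncard)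
    (houtW : ∀ w ∈ W, ∃ x, E w x)
    {u : V} (hu : u ∈ U) (hasOut : ∃ w, E u w) :
    ∃ w, E w u ∧ {z | E u z} = {w} := by
  obtain ⟨w₀, hw₀⟩ := hasOut
  have hw₀W : w₀ ∈ W := by
    rcases hbi _ _ hw₀ with h | h
    · exact h.2
    · exact absurd ⟨hu, h.1⟩ (hdisj u)
  -- step: a 2-chain from u lands in a vertex with the same out-set
  have step : ∀ w x, E u w → E w x → {z | E u z} = {z | E x z} := by
    intro w x h1 h2
    have hwW : w ∈ W := by
      rcases hbi _ _ h1 with h | h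
      · exact h.2
      · exact absurd ⟨hu, h.1⟩ (hdisj u)
    have hxU : x ∈ U := by
      rcases hbi _ _ h2 with h | h
      · exact absurd ⟨h.1, hwW⟩ (hdisj w)
      · exact h.2
    have hsub : {z | E x z} ⊆ {z | E u z} := fun z hz => hN2 u w x z h1 h2 hz
    exact (Set.eq_of_subset_of_ncard_le hsub (le_of_eq (hcOut u x (Or.inl ⟨hu, hxU⟩)))).symm
  obtain ⟨u', hu'⟩ := houtW w₀ hw₀W
  have houtEq : {z | E u z} = {z | E u' z} := step w₀ u' hw₀ hu'
  have hu'U : u' ∈ U := by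
    rcases hbi _ _ hu' with h | h
    · exact absurd ⟨h.1, hw₀W⟩ (hdisj w₀)
    · exact h.2
  have hu'w₀ : E u' w₀ := by
    have : w₀ ∈ {z | E u' z} := houtEq ▸ (hw₀ : w₀ ∈ {z | E u z})
    exact this
  have hsing : {z | E u z} = {w₀} := by
    ext w''
    simp only [Set.mem_setOf_eq, Set.mem_singleton_iff]
    constructor
    · intro hw''
      have hw''W : w'' ∈ W := by
        rcases hbi _ _ hw'' with h | h
        · exact h.2
        · exact absurd ⟨hu, h.1⟩ (hdisj u)
      obtain ⟨u'', hu''⟩ := houtW w'' hw''W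
      have houtEq2 : {z | E u z} = {z | E u'' z} := step w'' u'' hw'' hu''
      have h1 : E u'' w₀ := by
        have : w₀ ∈ {z | E u'' z} := houtEq2 ▸ (hw₀ : w₀ ∈ {z | E u z})
        exact this
      have h3 : E u' w'' := by
        have : w'' ∈ {z | E u' z} := houtEq ▸ (hw'' : w'' ∈ {z | E u z})
        exact this
      apply hthin
      refine ⟨fun z => ⟨fun h => ?_, fun h => ?_⟩, fun z => ⟨fun h => ?_, fun h => ?_⟩⟩
      · exact hN2 w₀ u' w'' z hu' h3 h
      · exact hN2 w'' u'' w₀ z hu'' h1 h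
      · exact hN2 z w'' u'' w₀ h hu'' h1
      · exact hN2 z w₀ u' w'' h hu' h3
    · rintro rfl
      exact hw₀
  have huu' : u = u' := by
    apply hthin
    constructor
    · intro z
      exact Set.ext_iff.mp houtEq z
    · intro z
      have hsub : {z | E z u} ⊆ {z | E z u'} := fun x hx => hN2 x u w₀ u' hx hw₀ hu'
      have hins : {z | E z u} = {z | E z u'} :=
        Set.eq_of_subset_of_ncard_le hsub (le_of_eq (hcIn u' u (Or.inl ⟨hu'U, hu⟩)))
      exact Set.ext_iff.mp hins z
  exact ⟨w₀, huu' ▸ hu', hsing⟩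

/-- Key lemma in the "all edges leave U" case. -/
theorem myDirKey
    (hdisj : ∀ v, ¬(v ∈ U ∧ v ∈ W))
    (hbi : ∀ u v, E u v → (u ∈ U ∧ v ∈ W) ∨ (u ∈ W ∧ v ∈ U))
    (hN3 : AxN3 E)
    (hthin : ∀ x y, dotSim E x y → x = y)
    (hcOut : ∀ x y, ((x ∈ U ∧ y ∈ U) ∨ (x ∈ W ∧ y ∈ W)) →
      {z | E x z}.ncard = {z | E y z}.ncard)
    (hnoW : ∀ w ∈ W, ∀ x, ¬E w x) :
    (∀ u v v', E u v → E u v' → v = v') ∧ (∀ u u' v, E u v → E u' v → u = u') := by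
  have hUside : ∀ x y, E x y → x ∈ U ∧ y ∈ W := by
    intro x y h
    rcases hbi _ _ h with h' | h'
    · exact h'
    · exact (hnoW x h'.1 y h).elim
  have hinUempty : ∀ x y, x ∈ U → ¬E y x := by
    intro x y hx h
    have := (hUside y x h).2
    exact hdisj x ⟨hx, this⟩
  have c2 : ∀ u u' v, E u v → E u' v → u = u' := by
    intro u u' v h h'
    have huU := (hUside u v h).1
    have hu'U := (hUside u' v h').1
    have houts : {z | E u z} = {z | E u' z} := by
      rcases hN3 u u' v h h' with hss | hss
      · exact Set.eq_of_subset_of_ncard_le (fun z hz => hss z hz)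
          (le_of_eq (hcOut u' u (Or.inl ⟨hu'U, huU⟩)))
      · exact (Set.eq_of_subset_of_ncard_le (fun z hz => hss z hz)
          (le_of_eq (hcOut u u' (Or.inl ⟨huU, hu'U⟩)))).symm
    apply hthin
    constructor
    · intro z
      exact Set.ext_iff.mp houts z
    · intro z
      exact ⟨fun hh => absurd hh (hinUempty u z huU),
             fun hh => absurd hh (hinUempty u' z hu'U)⟩
  have c1 : ∀ u v v', E u v → E u v' → v = v' := by
    intro u v v' h h'
    have hvW := (hUside u v h).2
    have hv'W := (hUside u v' h').2
    apply hthin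
    constructor
    · intro z
      exact ⟨fun hh => absurd hh (hnoW v hvW z), fun hh => absurd hh (hnoW v' hv'W z)⟩
    · intro z
      constructor
      · intro hh
        have : z = u := c2 z u v hh h
        rw [this]; exact h'
      · intro hh
        have : z = u := c2 z u v' hh h'
        rw [this]; exact h
  exact ⟨c1, c2⟩


/-- The group part: if the edge relation is a perfect "partner" matching compatible
with colors, the color-preserving automorphism group is `Sym(n)`. -/
theorem myGroupIso {n : ℕ}
    (hpart : ∀ v, v ∈ U ∨ v ∈ W) (hdisj : ∀ v, ¬(v ∈ U ∧ v ∈ W))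
    (hUcard : U.ncard = n)
    (hR : ∀ v, ∃! x, E v x ∨ E x v)
    (hRcol : ∀ v x, (E v x ∨ E x v) → (v ∈ U → x ∈ W) ∧ (v ∈ W → x ∈ U))
    (hdir : ∀ x y x' y', (E x y ∨ E y x) → (E x' y' ∨ E y' x') → (x ∈ U ↔ x' ∈ U) →
      (E x y ↔ E x' y')) :
    ∃ H : Subgroup (Equiv.Perm V),
      (∀ π : Equiv.Perm V, π ∈ H ↔ IsAutI E U W π) ∧
      Nonempty (H ≃* Equiv.Perm (Fin n)) := by
  classical
  set f : V → V := fun v => (hR v).exists.choose with hf_def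
  have hfR : ∀ v, E v (f v) ∨ E (f v) v := fun v => (hR v).exists.choose_spec
  have hfu : ∀ v x, (E v x ∨ E x v) → x = f v := fun v x hx => (hR v).unique hx (hfR v)
  have hfinv : Function.Involutive f := fun v => (hfu (f v) v (hfR v).symm).symm
  have hfU : ∀ v, v ∈ U → f v ∈ W := fun v hv => (hRcol v (f v) (hfR v)).1 hv
  have hfW : ∀ v, v ∈ W → f v ∈ U := fun v hv => (hRcol v (f v) (hfR v)).2 hv
  have hfnotU : ∀ v, v ∉ U → f v ∈ U := fun v hv => hfW v ((hpart v).resolve_left hv)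
  have hfUnotU : ∀ v, v ∈ U → f v ∉ U := fun v hv h => hdisj (f v) ⟨h, hfU v hv⟩
  have hcomm : ∀ π : Equiv.Perm V, IsAutI E U W π → ∀ v, π (f v) = f (π v) := by
    intro π hπ v
    exact hfu (π v) (π (f v)) ((hfR v).imp (hπ.1 _ _) (hπ.1 _ _))
  let Hgrp : Subgroup (Equiv.Perm V) :=
    { carrier := {π | IsAutI E U W π}
      one_mem' := myAutI_one
      mul_mem' := fun ha hb => myAutI_mul ha hb
      inv_mem' := fun ha => myAutI_inv ha }
  have hmem : ∀ π, π ∈ Hgrp ↔ IsAutI E U W π := fun π => Iff.rfl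
  have hiff : ∀ π : Hgrp, ∀ x, x ∈ U ↔ π.1 x ∈ U := by
    intro π x
    have hπ : IsAutI E U W π.1 := (hmem π.1).mp π.2
    constructor
    · exact hπ.2.1 x
    · intro hx
      by_contra hxU
      exact hdisj _ ⟨hx, hπ.2.2 x ((hpart x).resolve_left hxU)⟩
  let Ψ : Hgrp →* Equiv.Perm U :=
    { toFun := fun π => Equiv.Perm.subtypePerm π.1 (fun x => (hiff π x).symm)
      map_one' := by
        ext x
        simp [Equiv.Perm.subtypePerm_apply]
      map_mul' := by
        intro a b
        ext x
        simp [Equiv.Perm.subtypePerm_apply]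
        rfl }
  have hΨapp : ∀ (π : Hgrp) (v : V) (hv : v ∈ U), (Ψ π ⟨v, hv⟩ : V) = π.1 v := by
    intro π v hv
    simp [Ψ, Equiv.Perm.subtypePerm_apply]
  have hΨinj : Function.Injective Ψ := by
    intro a b hab
    have habU : ∀ v, v ∈ U → a.1 v = b.1 v := by
      intro v hv
      have := congrArg (fun σ : Equiv.Perm U => (σ ⟨v, hv⟩ : V)) hab
      simpa [hΨapp] using this
    apply Subtype.ext; apply Equiv.ext; intro v
    rcases hpart v with hv | hv
    · exact habU v hv
    · have h1 : a.1 (f v) = b.1 (f v) := habU (f v) (hfW v hv)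
      have ha := hcomm a.1 ((hmem a.1).mp a.2) v
      have hb := hcomm b.1 ((hmem b.1).mp b.2) v
      have h2 : f (a.1 v) = f (b.1 v) := by rw [← ha, ← hb, h1]
      have h3 := congrArg f h2
      rwa [hfinv, hfinv] at h3
  have hΨsurj : Function.Surjective Ψ := by
    intro σ
    let τ : Equiv.Perm V := σ.extendDomain (Equiv.refl U)
    have hτU : ∀ (v : V) (hv : v ∈ U), τ v = ↑(σ ⟨v, hv⟩) := by
      intro v hv
      simp [τ, Equiv.Perm.extendDomain_apply_subtype _ _ hv]
    have hτn : ∀ v : V, v ∉ U → τ v = v := fun v hv =>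
      Equiv.Perm.extendDomain_apply_not_subtype _ _ hv
    let fp : Equiv.Perm V := hfinv.toPerm f
    have hfp : ∀ v, fp v = f v := fun v => rfl
    let π : Equiv.Perm V := τ * (fp * τ * fp)
    have hπU : ∀ (v : V) (hv : v ∈ U), π v = ↑(σ ⟨v, hv⟩) := by
      intro v hv
      show τ (fp (τ (fp v))) = _
      simp only [hfp]
      rw [hτn (f v) (hfUnotU v hv), hfinv v, hτU v hv]
    have hπW : ∀ (v : V) (hv : v ∉ U), π v = f ↑(σ ⟨f v, hfnotU v hv⟩) := by
      intro v hv
      show τ (fp (τ (fp v))) = _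
      simp only [hfp]
      rw [hτU (f v) (hfnotU v hv)]
      exact hτn _ (hfUnotU _ (σ ⟨f v, hfnotU v hv⟩).2)
    have hπmemU : ∀ v ∈ U, π v ∈ U := by
      intro v hv; rw [hπU v hv]; exact (σ ⟨v, hv⟩).2
    have hπmemW : ∀ v ∈ W, π v ∈ W := by
      intro v hv
      have hvU : v ∉ U := fun h => hdisj v ⟨h, hv⟩
      rw [hπW v hvU]
      exact hfU _ (σ ⟨f v, hfnotU v hvU⟩).2
    have hπU_iff : ∀ v, v ∈ U ↔ π v ∈ U := by
      intro v
      constructor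
      · exact hπmemU v
      · intro h
        by_contra hvU
        have : π v ∈ W := hπmemW v ((hpart v).resolve_left hvU)
        exact hdisj _ ⟨h, this⟩
    have hπcomm : ∀ v, π (f v) = f (π v) := by
      intro v
      by_cases hv : v ∈ U
      · have h1 : f v ∉ U := hfUnotU v hv
        rw [hπW (f v) h1, hπU v hv]
        have h2 : (⟨f (f v), hfnotU (f v) h1⟩ : Set.Elem U) = ⟨v, hv⟩ := Subtype.ext (hfinv v)
        rw [h2]
      · have h1 : f v ∈ U := hfnotU v hv
        rw [hπU (f v) h1, hπW v hv, hfinv]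
    have hπaut : IsAut E π := by
      intro x y hxy
      have hyx : y = f x := hfu x y (Or.inl hxy)
      have h1 : π y = f (π x) := by rw [hyx]; exact hπcomm x
      rw [h1]
      exact (hdir x (f x) (π x) (f (π x)) (hfR x) (hfR (π x)) (hπU_iff x)).mp
        (by rw [← hyx]; exact hxy)
    refine ⟨⟨π, (hmem π).mpr ⟨hπaut, hπmemU, hπmemW⟩⟩, ?_⟩
    ext x
    exact (hΨapp ⟨π, (hmem π).mpr ⟨hπaut, hπmemU, hπmemW⟩⟩ x.1 x.2).trans (hπU x.1 x.2)
  have e1 : Hgrp ≃* Equiv.Perm U := MulEquiv.ofBijective Ψ ⟨hΨinj, hΨsurj⟩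
  haveI : Fintype U := Fintype.ofFinite _
  have hcard : Fintype.card U = n := by
    rw [← Nat.card_eq_fintype_card, Nat.card_coe_set_eq, hUcard]
  have e2 : (U : Type _) ≃ Fin n := Fintype.equivFinOfCardEq hcard
  have e3 : Equiv.Perm U ≃* Equiv.Perm (Fin n) :=
    { toEquiv := Equiv.permCongr e2
      map_mul' := by
        intro p q
        ext x
        simp [Equiv.permCongr_apply, Equiv.Perm.mul_apply] }
  exact ⟨Hgrp, hmem, ⟨e1.trans e3⟩⟩

end Aux

/-- Let `G` be a finite thin 2-qBMG with `|U| = |W| = n` whose color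
classes `U`, `W` are both orbits of `Aut_I(G)`.  Then `E` is either a union of pairwise
vertex-disjoint non-symmetric edges or a union of pairwise vertex-disjoint symmetric
edges, and `Aut_I(G)` is isomorphic to the symmetric group on `n` letters. -/
theorem stmt_12 {V : Type*} [Fintype V] [DecidableEq V] (E : V → V → Prop) (U W : Set V)
    (n : ℕ) (hG : IsQBMG E U W) (hthin : ∀ x y, dotSim E x y → x = y)
    (hU : U.ncard = n) (hW : W.ncard = n)
    (hOrbU : IsAutIOrbit E U W U) (hOrbW : IsAutIOrbit E U W W) :
    (((∀ u v, E u v → ¬E v u) ∧ PairwiseDisjointEdges E) ∨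
     ((∀ u v, E u v → E v u) ∧ PairwiseDisjointSymEdges E)) ∧
    ∃ H : Subgroup (Equiv.Perm V),
      (∀ π : Equiv.Perm V, π ∈ H ↔ IsAutI E U W π) ∧
      Nonempty (H ≃* Equiv.Perm (Fin n)) := by
  classical
  obtain ⟨hirr, ⟨hpart, hdisj, hbi⟩, hN1, hN2, hN3⟩ := hG
  obtain ⟨hUne, hOU⟩ := hOrbU
  obtain ⟨hWne, hOW⟩ := hOrbW
  have hcOut : ∀ x y, ((x ∈ U ∧ y ∈ U) ∨ (x ∈ W ∧ y ∈ W)) →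
      {z | E x z}.ncard = {z | E y z}.ncard := by
    intro x y hxy
    rcases hxy with ⟨hx, hy⟩ | ⟨hx, hy⟩
    · obtain ⟨g, hg, hgx⟩ := (hOU x hx y).mp hy
      rw [← hgx]; exact (myOuts_ncard_eq hg x).symm
    · obtain ⟨g, hg, hgx⟩ := (hOW x hx y).mp hy
      rw [← hgx]; exact (myOuts_ncard_eq hg x).symm
  have hcIn : ∀ x y, ((x ∈ U ∧ y ∈ U) ∨ (x ∈ W ∧ y ∈ W)) →
      {z | E z x}.ncard = {z | E z y}.ncard := by
    intro x y hxy
    rcases hxy with ⟨hx, hy⟩ | ⟨hx, hy⟩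
    · obtain ⟨g, hg, hgx⟩ := (hOU x hx y).mp hy
      rw [← hgx]; exact (myIns_ncard_eq hg x).symm
    · obtain ⟨g, hg, hgx⟩ := (hOW x hx y).mp hy
      rw [← hgx]; exact (myIns_ncard_eq hg x).symm
  have hRcol : ∀ v x, (E v x ∨ E x v) → (v ∈ U → x ∈ W) ∧ (v ∈ W → x ∈ U) := by
    intro v x h
    rcases h with h | h
    · rcases hbi _ _ h with ⟨h1, h2⟩ | ⟨h1, h2⟩
      · exact ⟨fun _ => h2, fun hv => absurd ⟨h1, hv⟩ (hdisj v)⟩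
      · exact ⟨fun hv => absurd ⟨hv, h1⟩ (hdisj v), fun _ => h2⟩
    · rcases hbi _ _ h with ⟨h1, h2⟩ | ⟨h1, h2⟩
      · exact ⟨fun hv => absurd ⟨hv, h2⟩ (hdisj v), fun _ => h1⟩
      · exact ⟨fun _ => h1, fun hv => absurd ⟨h2, hv⟩ (hdisj v)⟩
  by_cases hA : ∃ u ∈ U, ∃ w, E u w <;> by_cases hB : ∃ w ∈ W, ∃ x, E w x
  -- Case 1: symmetric matching
  · have houtU : ∀ u ∈ U, ∃ w, E u w := by
      obtain ⟨u₀, hu₀, w₀, hw₀⟩ := hA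
      intro u hu
      have h1 : 0 < {z | E u₀ z}.ncard := myNcard_pos.mpr ⟨w₀, hw₀⟩
      have h2 := hcOut u u₀ (Or.inl ⟨hu, hu₀⟩)
      have h3 : ({z | E u z} : Set V).Nonempty := myNcard_pos.mp (by rw [h2]; exact h1)
      exact h3
    have houtW : ∀ w ∈ W, ∃ x, E w x := by
      obtain ⟨w₀, hw₀, x₀, hx₀⟩ := hB
      intro w hw
      have h1 : 0 < {z | E w₀ z}.ncard := myNcard_pos.mpr ⟨x₀, hx₀⟩
      have h2 := hcOut w w₀ (Or.inr ⟨hw, hw₀⟩)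
      have h3 : ({z | E w z} : Set V).Nonempty := myNcard_pos.mp (by rw [h2]; exact h1)
      exact h3
    have keyU : ∀ u ∈ U, ∃ w, E w u ∧ {z | E u z} = {w} :=
      fun u hu => myKey hdisj hbi hN2 hthin hcOut hcIn houtW hu (houtU u hu)
    have keyW : ∀ w ∈ W, ∃ x, E x w ∧ {z | E w z} = {x} := by
      intro w hw
      refine myKey (U := W) (W := U) ?_ ?_ hN2 hthin ?_ ?_ houtU hw (houtW w hw)
      · intro v hv; exact hdisj v ⟨hv.2, hv.1⟩
      · intro a b h; exact (hbi a b h).symm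
      · intro x y h; exact hcOut x y h.symm
      · intro x y h; exact hcIn x y h.symm
    have uniqOut : ∀ x y y', E x y → E x y' → y = y' := by
      intro x y y' h h'
      rcases hpart x with hx | hx
      · obtain ⟨w, _, hs⟩ := keyU x hx
        have h1 : y ∈ {z | E x z} := h
        have h2 : y' ∈ {z | E x z} := h'
        rw [hs] at h1 h2
        exact h1.trans h2.symm
      · obtain ⟨w, _, hs⟩ := keyW x hx
        have h1 : y ∈ {z | E x z} := h
        have h2 : y' ∈ {z | E x z} := h'
        rw [hs] at h1 h2
        exact h1.trans h2.symm
    have sym : ∀ x y, E x y → E y x := by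
      intro x y h
      rcases hpart x with hx | hx
      · obtain ⟨w, hw, hs⟩ := keyU x hx
        have h1 : y ∈ {z | E x z} := h
        rw [hs] at h1
        rw [Set.mem_singleton_iff] at h1
        rw [h1]; exact hw
      · obtain ⟨w, hw, hs⟩ := keyW x hx
        have h1 : y ∈ {z | E x z} := h
        rw [hs] at h1
        rw [Set.mem_singleton_iff] at h1
        rw [h1]; exact hw
    have pairS : PairwiseDisjointSymEdges E := by
      intro u v u' v' h h'
      by_cases h1 : u = u'
      · subst h1; exact Or.inl ⟨rfl, uniqOut u v v' h h'⟩
      · by_cases h2 : u = v'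
        · subst h2
          exact Or.inr (Or.inl ⟨rfl, uniqOut u v u' h (sym _ _ h')⟩)
        · refine Or.inr (Or.inr ⟨h1, h2, fun h3 => ?_, fun h3 => ?_⟩)
          · subst h3
            exact h2 (uniqOut v u v' (sym u v h) h')
          · subst h3
            exact h1 (uniqOut v u u' (sym u v h) (sym u' v h'))
    have hR : ∀ v, ∃! x, E v x ∨ E x v := by
      intro v
      rcases hpart v with hv | hv
      · obtain ⟨w, hw, hs⟩ := keyU v hv
        have hvw : E v w := by
          have : w ∈ {z | E v z} := by rw [hs]; rfl
          exact this
        refine ⟨w, Or.inl hvw, ?_⟩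
        intro x hx
        rcases hx with hx | hx
        · exact uniqOut v x w hx hvw
        · exact uniqOut v x w (sym x v hx) hvw
      · obtain ⟨w, hw, hs⟩ := keyW v hv
        have hvw : E v w := by
          have : w ∈ {z | E v z} := by rw [hs]; rfl
          exact this
        refine ⟨w, Or.inl hvw, ?_⟩
        intro x hx
        rcases hx with hx | hx
        · exact uniqOut v x w hx hvw
        · exact uniqOut v x w (sym x v hx) hvw
    have hdir : ∀ x y x' y', (E x y ∨ E y x) → (E x' y' ∨ E y' x') → (x ∈ U ↔ x' ∈ U) →
        (E x y ↔ E x' y') := by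
      intro x y x' y' h h' _
      constructor
      · intro _
        rcases h' with h' | h'
        · exact h'
        · exact sym _ _ h'
      · intro _
        rcases h with h | h
        · exact h
        · exact sym _ _ h
    exact ⟨Or.inr ⟨sym, pairS⟩, myGroupIso hpart hdisj hU hR hRcol hdir⟩
  -- Case 2: all edges from U to W
  · have hnoW : ∀ w ∈ W, ∀ x, ¬E w x := fun w hw x h => hB ⟨w, hw, x, h⟩
    obtain ⟨c1, c2⟩ := myDirKey hdisj hbi hN3 hthin hcOut hnoW
    have hUside : ∀ x y, E x y → x ∈ U ∧ y ∈ W := by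
      intro x y h
      rcases hbi _ _ h with h' | h'
      · exact h'
      · exact (hnoW x h'.1 y h).elim
    have hasym : ∀ u v, E u v → ¬E v u := by
      intro u v h h'
      exact hnoW v (hUside u v h).2 u h'
    have pairD : PairwiseDisjointEdges E := by
      intro u v u' v' h h'
      obtain ⟨huU, hvW⟩ := hUside _ _ h
      obtain ⟨hu'U, hv'W⟩ := hUside _ _ h'
      by_cases h1 : u = u'
      · subst h1; exact Or.inl ⟨rfl, c1 u v v' h h'⟩
      · refine Or.inr ⟨h1, fun h2 => ?_, fun h2 => ?_, fun h2 => ?_⟩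
        · exact hdisj u ⟨huU, by rw [h2]; exact hv'W⟩
        · exact hdisj v ⟨by rw [h2]; exact hu'U, hvW⟩
        · exact h1 (c2 u u' v h (by rw [h2]; exact h'))
    have houtU : ∀ u ∈ U, ∃ w, E u w := by
      obtain ⟨u₀, hu₀, w₀, hw₀⟩ := hA
      intro u hu
      have h1 : 0 < {z | E u₀ z}.ncard := myNcard_pos.mpr ⟨w₀, hw₀⟩
      have h2 := hcOut u u₀ (Or.inl ⟨hu, hu₀⟩)
      have h3 : ({z | E u z} : Set V).Nonempty := myNcard_pos.mp (by rw [h2]; exact h1)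
      exact h3
    have hinW : ∀ w ∈ W, ∃ x, E x w := by
      obtain ⟨u₀, hu₀, w₀, hw₀⟩ := hA
      have hw₀W : w₀ ∈ W := (hUside _ _ hw₀).2
      intro w hw
      have h1 : 0 < {z | E z w₀}.ncard := myNcard_pos.mpr ⟨u₀, hw₀⟩
      have h2 := hcIn w w₀ (Or.inr ⟨hw, hw₀W⟩)
      have h3 : ({z | E z w} : Set V).Nonempty := myNcard_pos.mp (by rw [h2]; exact h1)
      exact h3
    have hR : ∀ v, ∃! x, E v x ∨ E x v := by
      intro v
      rcases hpart v with hv | hv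
      · obtain ⟨w, hw⟩ := houtU v hv
        refine ⟨w, Or.inl hw, ?_⟩
        intro x hx
        rcases hx with hx | hx
        · exact c1 v x w hx hw
        · exact absurd ⟨hv, (hUside x v hx).2⟩ (hdisj v)
      · obtain ⟨x₀, hx₀⟩ := hinW v hv
        refine ⟨x₀, Or.inr hx₀, ?_⟩
        intro x hx
        rcases hx with hx | hx
        · exact (hnoW v hv x hx).elim
        · exact c2 x x₀ v hx hx₀
    have hdirShape : ∀ x y, (E x y ∨ E y x) → (E x y ↔ x ∈ U) := by
      intro x y h
      constructor
      · intro h'; exact (hUside x y h').1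
      · intro hx
        rcases h with h | h
        · exact h
        · exact absurd ⟨hx, (hUside y x h).2⟩ (hdisj x)
    have hdir : ∀ x y x' y', (E x y ∨ E y x) → (E x' y' ∨ E y' x') → (x ∈ U ↔ x' ∈ U) →
        (E x y ↔ E x' y') := by
      intro x y x' y' h h' hiff
      rw [hdirShape x y h, hdirShape x' y' h']
      exact hiff
    exact ⟨Or.inl ⟨hasym, pairD⟩, myGroupIso hpart hdisj hU hR hRcol hdir⟩
  -- Case 3: all edges from W to U
  · have hnoU : ∀ u ∈ U, ∀ x, ¬E u x := fun u hu x h => hA ⟨u, hu, x, h⟩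
    obtain ⟨c1, c2⟩ := myDirKey (U := W) (W := U)
      (fun v hv => hdisj v ⟨hv.2, hv.1⟩) (fun a b h => (hbi a b h).symm) hN3 hthin
      (fun x y h => hcOut x y h.symm) hnoU
    have hWside : ∀ x y, E x y → x ∈ W ∧ y ∈ U := by
      intro x y h
      rcases hbi _ _ h with h' | h'
      · exact (hnoU x h'.1 y h).elim
      · exact h'
    have hasym : ∀ u v, E u v → ¬E v u := by
      intro u v h h'
      exact hnoU v (hWside u v h).2 u h'
    have pairD : PairwiseDisjointEdges E := by
      intro u v u' v' h h'
      obtain ⟨huW, hvU⟩ := hWside _ _ h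
      obtain ⟨hu'W, hv'U⟩ := hWside _ _ h'
      by_cases h1 : u = u'
      · subst h1; exact Or.inl ⟨rfl, c1 u v v' h h'⟩
      · refine Or.inr ⟨h1, fun h2 => ?_, fun h2 => ?_, fun h2 => ?_⟩
        · exact hdisj u ⟨by rw [h2]; exact hv'U, huW⟩
        · exact hdisj v ⟨hvU, by rw [h2]; exact hu'W⟩
        · exact h1 (c2 u u' v h (by rw [h2]; exact h'))
    have houtW : ∀ w ∈ W, ∃ x, E w x := by
      obtain ⟨w₀, hw₀, x₀, hx₀⟩ := hB
      intro w hw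
      have h1 : 0 < {z | E w₀ z}.ncard := myNcard_pos.mpr ⟨x₀, hx₀⟩
      have h2 := hcOut w w₀ (Or.inr ⟨hw, hw₀⟩)
      have h3 : ({z | E w z} : Set V).Nonempty := myNcard_pos.mp (by rw [h2]; exact h1)
      exact h3
    have hinU : ∀ u ∈ U, ∃ x, E x u := by
      obtain ⟨w₀, hw₀, x₀, hx₀⟩ := hB
      have hx₀U : x₀ ∈ U := (hWside _ _ hx₀).2
      intro u hu
      have h1 : 0 < {z | E z x₀}.ncard := myNcard_pos.mpr ⟨w₀, hx₀⟩
      have h2 := hcIn u x₀ (Or.inl ⟨hu, hx₀U⟩)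
      have h3 : ({z | E z u} : Set V).Nonempty := myNcard_pos.mp (by rw [h2]; exact h1)
      exact h3
    have hR : ∀ v, ∃! x, E v x ∨ E x v := by
      intro v
      rcases hpart v with hv | hv
      · obtain ⟨x₀, hx₀⟩ := hinU v hv
        refine ⟨x₀, Or.inr hx₀, ?_⟩
        intro x hx
        rcases hx with hx | hx
        · exact (hnoU v hv x hx).elim
        · exact c2 x x₀ v hx hx₀
      · obtain ⟨w, hw⟩ := houtW v hv
        refine ⟨w, Or.inl hw, ?_⟩
        intro x hx
        rcases hx with hx | hx
        · exact c1 v x w hx hw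
        · exact ((hdisj v ⟨(hWside x v hx).2, hv⟩)).elim
    have hWiff : ∀ x : V, x ∈ W ↔ x ∉ U :=
      fun x => ⟨fun h h' => hdisj x ⟨h', h⟩, fun h => (hpart x).resolve_left h⟩
    have hdirShape : ∀ x y, (E x y ∨ E y x) → (E x y ↔ x ∈ W) := by
      intro x y h
      constructor
      · intro h'; exact (hWside x y h').1
      · intro hx
        rcases h with h | h
        · exact h
        · exact absurd ⟨(hWside y x h).2, hx⟩ (hdisj x)
    have hdir : ∀ x y x' y', (E x y ∨ E y x) → (E x' y' ∨ E y' x') → (x ∈ U ↔ x' ∈ U) →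
        (E x y ↔ E x' y') := by
      intro x y x' y' h h' hiff
      rw [hdirShape x y h, hdirShape x' y' h', hWiff, hWiff]
      exact not_congr hiff
    exact ⟨Or.inl ⟨hasym, pairD⟩, myGroupIso hpart hdisj hU hR hRcol hdir⟩
  -- Case 4: no edges at all, contradiction with thinness
  · obtain ⟨u₀, hu₀⟩ := hUne
    obtain ⟨w₀, hw₀⟩ := hWne
    have hEempty : ∀ x y, ¬E x y := by
      intro x y h
      rcases hbi _ _ h with h' | h'
      · exact hA ⟨x, h'.1, y, h⟩
      · exact hB ⟨x, h'.1, y, h⟩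
    have h1 : u₀ = w₀ := hthin _ _
      ⟨fun z => iff_of_false (hEempty _ _) (hEempty _ _),
       fun z => iff_of_false (hEempty _ _) (hEempty _ _)⟩
    exact absurd ⟨by rw [h1] at hu₀; exact hu₀, hw₀⟩ (hdisj w₀)
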